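/- Let n ≥ 7 and 0 < s < 2. With U₁ the standard Hardy-Sobolev bubble and 2⋆(s) = 2(n-s)/(n-2), the combination ∫_{ℝⁿ}|X|⁴|∇U₁|² dX / ∫_{ℝⁿ}|X|²U₁² dX − (2/2⋆(s)) ∫_{ℝⁿ}|X|^{4-s}U₁^{2⋆(s)} dX / ∫_{ℝⁿ}|X|²U₁² dX equals (n+2)(n-2)(10-s) / (2(2n-2-s)). -/

import Mathlib

open MeasureTheory

noncomputable def kappa (n : ℕ) (s : ℝ) : ℝ :=
  (((n : ℝ) - s) * ((n : ℝ) - 2)) ^ (((n : ℝ) - 2) / (2 * (2 - s)))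

noncomputable def U1 (n : ℕ) (s : ℝ) (X : EuclideanSpace ℝ (Fin n)) : ℝ :=
  kappa n s * (1 + ‖X‖ ^ (2 - s)) ^ (-(((n : ℝ) - 2) / (2 - s)))

noncomputable def critExp (n : ℕ) (s : ℝ) : ℝ := 2 * ((n : ℝ) - s) / ((n : ℝ) - 2)

open Real Set Filter InnerProductSpace


noncomputable def Ifun (σ a b : ℝ) : ℝ := ∫ r in Ioi (0:ℝ), r ^ a * (1 + r ^ σ) ^ (-b)

lemma contOn (σ a b : ℝ) : ContinuousOn (fun r : ℝ => r ^ a * (1 + r ^ σ) ^ (-b)) (Ioi 0) := by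
  intro r hr
  have hr0 : (0:ℝ) < r := hr
  have h1 : (0:ℝ) < 1 + r ^ σ := by positivity
  have hin : ContinuousAt (fun x : ℝ => 1 + x ^ σ) r :=
    continuousAt_const.add (Real.continuousAt_rpow_const r σ (Or.inl hr0.ne'))
  exact ContinuousAt.continuousWithinAt
    ((Real.continuousAt_rpow_const r a (Or.inl hr0.ne')).mul
      (hin.rpow_const (Or.inl h1.ne')))

lemma integrableI {σ a b : ℝ} (hσ : 0 < σ) (ha : -1 < a) (hb : 0 ≤ b)
    (hab : a - σ * b < -1) :
    IntegrableOn (fun r : ℝ => r ^ a * (1 + r ^ σ) ^ (-b)) (Ioi 0) := by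
  rw [← Ioc_union_Ioi_eq_Ioi (zero_le_one : (0:ℝ) ≤ 1)]
  apply IntegrableOn.union
  · -- on Ioc 0 1
    have hbound : IntegrableOn (fun r : ℝ => r ^ a) (Ioc 0 1) := by
      have := intervalIntegral.intervalIntegrable_rpow' (a := (0:ℝ)) (b := 1) ha
      rwa [intervalIntegrable_iff_integrableOn_Ioc_of_le zero_le_one] at this
    apply Integrable.mono' hbound
      (((contOn σ a b).mono Ioc_subset_Ioi_self).aestronglyMeasurable measurableSet_Ioc)
    · filter_upwards [ae_restrict_mem measurableSet_Ioc] with r hr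
      have hr0 : (0:ℝ) < r := hr.1
      have h1 : (0:ℝ) < 1 + r ^ σ := by positivity
      have h2 : (1 + r ^ σ) ^ (-b) ≤ 1 := by
        apply Real.rpow_le_one_of_one_le_of_nonpos
        · nlinarith [Real.rpow_nonneg hr0.le σ]
        · linarith
      rw [norm_mul, norm_of_nonneg (Real.rpow_nonneg hr0.le a),
        norm_of_nonneg (Real.rpow_nonneg h1.le (-b))]
      calc r ^ a * (1 + r ^ σ) ^ (-b) ≤ r ^ a * 1 :=
            mul_le_mul_of_nonneg_left h2 (Real.rpow_nonneg hr0.le a)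
        _ = r ^ a := mul_one _
  · -- on Ioi 1
    have hbound : IntegrableOn (fun r : ℝ => r ^ (a - σ * b)) (Ioi 1) :=
      integrableOn_Ioi_rpow_of_lt hab zero_lt_one
    apply Integrable.mono' hbound
      (((contOn σ a b).mono (Ioi_subset_Ioi zero_le_one)).aestronglyMeasurable measurableSet_Ioi)
    · filter_upwards [ae_restrict_mem measurableSet_Ioi] with r hr
      have hr1 : (1:ℝ) < r := hr
      have hr0 : (0:ℝ) < r := lt_trans zero_lt_one hr1
      have hrσ : (0:ℝ) < r ^ σ := Real.rpow_pos_of_pos hr0 σ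
      have h1 : (0:ℝ) < 1 + r ^ σ := by positivity
      have h2 : (1 + r ^ σ) ^ (-b) ≤ (r ^ σ) ^ (-b) := by
        apply Real.rpow_le_rpow_of_nonpos hrσ (by linarith) (by linarith)
      rw [norm_mul, norm_of_nonneg (Real.rpow_nonneg hr0.le a),
        norm_of_nonneg (Real.rpow_nonneg h1.le (-b))]
      calc r ^ a * (1 + r ^ σ) ^ (-b) ≤ r ^ a * (r ^ σ) ^ (-b) :=
            mul_le_mul_of_nonneg_left h2 (Real.rpow_nonneg hr0.le a)
        _ = r ^ (a - σ * b) := by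
            rw [← Real.rpow_mul hr0.le, ← Real.rpow_add hr0]; ring_nf

lemma IposI {σ a b : ℝ} (hσ : 0 < σ) (ha : -1 < a) (hb : 0 ≤ b) (hab : a - σ * b < -1) :
    0 < Ifun σ a b := by
  unfold Ifun
  rw [setIntegral_pos_iff_support_of_nonneg_ae ?_ (integrableI hσ ha hb hab)]
  · have hsub : Ioi (0:ℝ) ⊆ Function.support fun r : ℝ => r ^ a * (1 + r ^ σ) ^ (-b) := by
      intro r hr
      have hr0 : (0:ℝ) < r := hr
      have h1 : (0:ℝ) < 1 + r ^ σ := by positivity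
      exact (mul_pos (Real.rpow_pos_of_pos hr0 a) (Real.rpow_pos_of_pos h1 (-b))).ne'
    refine lt_of_lt_of_le ?_ (measure_mono (subset_inter hsub (subset_refl _)))
    simp [Real.volume_Ioi]
  · filter_upwards [ae_restrict_mem measurableSet_Ioi] with r hr
    have hr0 : (0:ℝ) < r := hr
    have h1 : (0:ℝ) < 1 + r ^ σ := by positivity
    exact (mul_pos (Real.rpow_pos_of_pos hr0 a) (Real.rpow_pos_of_pos h1 (-b))).le

lemma derivI {σ b c r : ℝ} (hr : 0 < r) :
    HasDerivAt (fun r : ℝ => r ^ c * (1 + r ^ σ) ^ (-b))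
      (c * r ^ (c - 1) * (1 + r ^ σ) ^ (-b) +
        r ^ c * (-b * (1 + r ^ σ) ^ (-b - 1) * (σ * r ^ (σ - 1)))) r := by
  have h1p : (0:ℝ) < 1 + r ^ σ := by positivity
  have h1 : HasDerivAt (fun r : ℝ => r ^ c) (c * r ^ (c - 1)) r :=
    Real.hasDerivAt_rpow_const (Or.inl hr.ne')
  have h2 : HasDerivAt (fun x : ℝ => 1 + x ^ σ) (σ * r ^ (σ - 1)) r :=
    (Real.hasDerivAt_rpow_const (Or.inl hr.ne')).const_add 1
  have h3 : HasDerivAt (fun t : ℝ => t ^ (-b)) (-b * (1 + r ^ σ) ^ (-b - 1)) (1 + r ^ σ) :=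
    Real.hasDerivAt_rpow_const (Or.inl h1p.ne')
  have h4 := h3.comp r h2
  exact h1.mul h4

lemma ibpI {σ a b : ℝ} (hσ : 0 < σ) (ha : -1 < a) (hb : 0 < b) (hab : a + 1 < σ * b) :
    (a + 1) * Ifun σ a b = b * σ * Ifun σ (a + σ) (b + 1) := by
  have hi1 : IntegrableOn (fun r : ℝ => r ^ a * (1 + r ^ σ) ^ (-b)) (Ioi 0) :=
    integrableI hσ ha hb.le (by linarith)
  have hi2 : IntegrableOn (fun r : ℝ => r ^ (a + σ) * (1 + r ^ σ) ^ (-(b + 1))) (Ioi 0) :=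
    integrableI hσ (by linarith) (by linarith) (by linarith [mul_pos hσ hb] ; )
  have key : (∫ r in Ioi (0:ℝ),
      ((a + 1) * (r ^ a * (1 + r ^ σ) ^ (-b)) -
        b * σ * (r ^ (a + σ) * (1 + r ^ σ) ^ (-(b + 1))))) = 0 - (0:ℝ) ^ (a+1) * (1 + (0:ℝ) ^ σ) ^ (-b) := by
    apply integral_Ioi_of_hasDerivAt_of_tendsto (f := fun r : ℝ => r ^ (a+1) * (1 + r ^ σ) ^ (-b))
    · -- continuity at 0 within Ici 0
      apply ContinuousAt.continuousWithinAt
      have c2 : ContinuousAt (fun r : ℝ => 1 + r ^ σ) 0 :=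
        continuousAt_const.add (Real.continuousAt_rpow_const 0 σ (Or.inr hσ.le))
      refine (Real.continuousAt_rpow_const 0 (a+1) (Or.inr (by linarith))).mul
        (c2.rpow_const (Or.inl ?_))
      simp [Real.zero_rpow hσ.ne']
    · intro r hr
      have hr0 : (0:ℝ) < r := hr
      have h := derivI (σ := σ) (b := b) (c := a + 1) hr0
      refine h.congr_deriv ?_
      rw [show a + 1 - 1 = a from by ring, show -b - 1 = -(b+1) from by ring,
        show a + σ = (a+1) + (σ-1) from by ring, Real.rpow_add hr0 (a+1) (σ-1)]
      ring
    · exact (hi1.const_mul _).sub (hi2.const_mul _)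
    · -- tendsto 0 at top
      apply squeeze_zero' (g := fun r : ℝ => r ^ (a + 1 - σ * b))
      · filter_upwards [eventually_gt_atTop (0:ℝ)] with r hr0
        have h1 : (0:ℝ) < 1 + r ^ σ := by positivity
        exact (mul_pos (Real.rpow_pos_of_pos hr0 _) (Real.rpow_pos_of_pos h1 _)).le
      · filter_upwards [eventually_gt_atTop (0:ℝ)] with r hr0
        have hrσ : (0:ℝ) < r ^ σ := Real.rpow_pos_of_pos hr0 σ
        have h2 : (1 + r ^ σ) ^ (-b) ≤ (r ^ σ) ^ (-b) :=
          Real.rpow_le_rpow_of_nonpos hrσ (by linarith) (by linarith)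
        calc r ^ (a+1) * (1 + r ^ σ) ^ (-b) ≤ r ^ (a+1) * (r ^ σ) ^ (-b) :=
              mul_le_mul_of_nonneg_left h2 (Real.rpow_nonneg hr0.le _)
          _ = r ^ (a + 1 - σ * b) := by
              rw [← Real.rpow_mul hr0.le, ← Real.rpow_add hr0]; ring_nf
      · rw [show a + 1 - σ * b = -(σ * b - (a+1)) from by ring]
        exact tendsto_rpow_neg_atTop (by linarith)
  rw [Real.zero_rpow (ne_of_gt (by linarith) : a + 1 ≠ 0),
    integral_sub (hi1.const_mul _) (hi2.const_mul _), integral_const_mul, integral_const_mul]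
    at key
  unfold Ifun
  simp only [zero_mul, sub_zero] at key ⊢
  linarith

lemma algI {σ a b : ℝ} (hσ : 0 < σ)
    (h1 : IntegrableOn (fun r : ℝ => r ^ a * (1 + r ^ σ) ^ (-(b - 1))) (Ioi 0))
    (h2 : IntegrableOn (fun r : ℝ => r ^ a * (1 + r ^ σ) ^ (-b)) (Ioi 0)) :
    Ifun σ (a + σ) b = Ifun σ a (b - 1) - Ifun σ a b := by
  unfold Ifun
  rw [← integral_sub h1 h2]
  apply setIntegral_congr_fun measurableSet_Ioi
  intro r hr
  have hr0 : (0:ℝ) < r := hr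
  have h1p : (0:ℝ) < 1 + r ^ σ := by positivity
  have e : (1 + r ^ σ) ^ (-(b - 1)) = (1 + r ^ σ) ^ (-b) * (1 + r ^ σ) := by
    rw [show -(b - 1) = -b + 1 from by ring, Real.rpow_add h1p, Real.rpow_one]
  show r ^ (a + σ) * (1 + r ^ σ) ^ (-b) =
    r ^ a * (1 + r ^ σ) ^ (-(b - 1)) - r ^ a * (1 + r ^ σ) ^ (-b)
  rw [e, Real.rpow_add hr0]
  ring

lemma kappa_pos {n : ℕ} (hn : 7 ≤ n) {s : ℝ} (hs2 : s < 2) : 0 < kappa n s := by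
  have h7 : (7:ℝ) ≤ (n:ℝ) := by exact_mod_cast hn
  exact Real.rpow_pos_of_pos (by nlinarith) _

lemma U1_eq (n : ℕ) (s : ℝ) :
    U1 n s = fun X : EuclideanSpace ℝ (Fin n) =>
      kappa n s * (1 + (‖X‖ ^ 2 : ℝ) ^ ((2 - s) / 2)) ^ (-(((n : ℝ) - 2) / (2 - s))) := by
  funext X
  rw [U1, ← Real.rpow_natCast ‖X‖ 2, ← Real.rpow_mul (norm_nonneg X)]
  norm_num
  left
  rw [show (2:ℝ) * ((2 - s)/2) = 2 - s from by ring]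

lemma grad_norm {n : ℕ} (hn : 7 ≤ n) {s : ℝ} (hs0 : 0 < s) (hs2 : s < 2)
    {X : EuclideanSpace ℝ (Fin n)} (hX : X ≠ 0) :
    ‖gradient (U1 n s) X‖ =
      kappa n s * ((n : ℝ) - 2) *
        (‖X‖ ^ (1 - s) * (1 + ‖X‖ ^ (2 - s)) ^ (-((((n : ℝ) - 2) / (2 - s)) + 1))) := by
  have h7 : (7:ℝ) ≤ (n:ℝ) := by exact_mod_cast hn
  set κ := kappa n s with hκ
  set P : ℝ := ((n : ℝ) - 2) / (2 - s) with hP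
  have hκpos : 0 < κ := kappa_pos hn hs2
  have hPpos : 0 < P := div_pos (by linarith) (by linarith)
  have hr : 0 < ‖X‖ := norm_pos_iff.mpr hX
  set t : ℝ := ‖X‖ ^ 2 with htdef
  have ht : 0 < t := by positivity
  have htσ : 0 < 1 + t ^ ((2 - s) / 2) := by positivity
  set D : ℝ := κ * (-P * (1 + t ^ ((2 - s) / 2)) ^ (-P - 1) * (((2 - s) / 2) * t ^ ((2 - s) / 2 - 1)))
    with hD
  -- derivative of the profile
  have hh : HasDerivAt (fun u : ℝ => κ * (1 + u ^ ((2 - s) / 2)) ^ (-P)) D t := by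
    have h2 : HasDerivAt (fun u : ℝ => 1 + u ^ ((2 - s) / 2))
        (((2 - s) / 2) * t ^ ((2 - s) / 2 - 1)) t :=
      (Real.hasDerivAt_rpow_const (Or.inl ht.ne')).const_add 1
    have h3 : HasDerivAt (fun v : ℝ => v ^ (-P))
        (-P * (1 + t ^ ((2 - s) / 2)) ^ (-P - 1)) (1 + t ^ ((2 - s) / 2)) :=
      Real.hasDerivAt_rpow_const (Or.inl htσ.ne')
    exact ((h3.comp t h2).const_mul κ)
  have hsq : HasFDerivAt (fun Y : EuclideanSpace ℝ (Fin n) => (‖Y‖ ^ 2 : ℝ))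
      (2 • (innerSL ℝ X)) X := (hasStrictFDerivAt_norm_sq X).hasFDerivAt
  have hcomp : HasFDerivAt (U1 n s) (D • (2 • (innerSL ℝ X))) X := by
    rw [U1_eq n s]
    have h5 := hh.comp_hasFDerivAt X hsq
    exact h5
  have hEq : (toDual ℝ (EuclideanSpace ℝ (Fin n))).symm (D • 2 • (innerSL ℝ) X)
      = (2 * D) • X := by
    have : D • 2 • (innerSL ℝ) X = toDual ℝ (EuclideanSpace ℝ (Fin n)) ((2 * D) • X) := by
      ext w
      simp [real_inner_smul_left, two_smul]
      ring
    rw [this, LinearIsometryEquiv.symm_apply_apply]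
  have hgrad : HasGradientAt (U1 n s) ((2 * D) • X) X :=
    hEq ▸ (hasFDerivAt_iff_hasGradientAt.mp hcomp)
  rw [hgrad.gradient, norm_smul, Real.norm_eq_abs]
  have hpow : ∀ q : ℝ, (‖X‖ ^ 2 : ℝ) ^ q = ‖X‖ ^ (2 * q) := by
    intro q
    rw [← Real.rpow_natCast ‖X‖ 2, ← Real.rpow_mul (norm_nonneg X)]
    norm_num
  have e1 : t ^ ((2 - s) / 2) = ‖X‖ ^ (2 - s) := by
    rw [htdef, hpow, show 2 * ((2 - s) / 2) = 2 - s from by ring]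
  have e2 : t ^ ((2 - s) / 2 - 1) = ‖X‖ ^ (-s) := by
    rw [htdef, hpow, show 2 * ((2 - s) / 2 - 1) = -s from by ring]
  have h2s : (0:ℝ) < 2 - s := by linarith
  have hA : (0:ℝ) < (1 + ‖X‖ ^ (2 - s)) ^ (-P - 1) := by positivity
  have hB : (0:ℝ) < ‖X‖ ^ (-s) := Real.rpow_pos_of_pos hr _
  have hDval : 2 * D = -(κ * (2 - s) * P * (‖X‖ ^ (-s) * (1 + ‖X‖ ^ (2 - s)) ^ (-P - 1))) := by
    rw [hD, e1, e2]; ring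
  rw [hDval, abs_neg, abs_of_pos (by positivity)]
  have hPs : (2 - s) * P = (n : ℝ) - 2 := by rw [hP]; field_simp
  rw [show -(P + 1) = -P - 1 from by ring, show (1:ℝ) - s = -s + 1 from by ring,
    Real.rpow_add hr, Real.rpow_one, ← hPs]
  ring

lemma radial (n : ℕ) (hn : 7 ≤ n) (g : ℝ → ℝ) :
    ∫ X : EuclideanSpace ℝ (Fin n), g ‖X‖ =
      ((n : ℝ) * (volume (Metric.ball (0 : EuclideanSpace ℝ (Fin n)) 1)).toReal) *
        ∫ y in Ioi (0:ℝ), y ^ (n - 1 : ℕ) * g y := by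
  haveI : NeZero n := ⟨by omega⟩
  rw [MeasureTheory.integral_fun_norm_addHaar (volume : Measure (EuclideanSpace ℝ (Fin n))) g]
  simp only [finrank_euclideanSpace_fin, nsmul_eq_mul, smul_eq_mul, mul_assoc]
  rfl


lemma intB {n : ℕ} (hn : 7 ≤ n) {s : ℝ} (hs0 : 0 < s) (hs2 : s < 2) :
    ∫ X : EuclideanSpace ℝ (Fin n), ‖X‖ ^ 2 * (U1 n s X) ^ 2 =
      ((n : ℝ) * (volume (Metric.ball (0 : EuclideanSpace ℝ (Fin n)) 1)).toReal) *
        (kappa n s ^ 2 * Ifun (2 - s) ((n:ℝ) + 1) (2 * (((n:ℝ) - 2) / (2 - s)))) := by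
  rw [show (∫ X : EuclideanSpace ℝ (Fin n), ‖X‖ ^ 2 * (U1 n s X) ^ 2) =
      ((n : ℝ) * (volume (Metric.ball (0 : EuclideanSpace ℝ (Fin n)) 1)).toReal) *
        ∫ y in Ioi (0:ℝ), y ^ (n - 1 : ℕ) *
          (y ^ 2 * (kappa n s * (1 + y ^ (2 - s)) ^ (-(((n:ℝ) - 2) / (2 - s)))) ^ 2)
    from radial n hn
      (fun r : ℝ => r ^ 2 * (kappa n s * (1 + r ^ (2 - s)) ^ (-(((n:ℝ) - 2) / (2 - s)))) ^ 2)]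
  congr 1
  rw [Ifun, ← integral_const_mul]
  apply setIntegral_congr_fun measurableSet_Ioi
  intro y hy
  have hy0 : (0:ℝ) < y := hy
  have hA : (0:ℝ) < 1 + y ^ (2 - s) := by positivity
  show y ^ (n - 1 : ℕ) *
      (y ^ 2 * (kappa n s * (1 + y ^ (2 - s)) ^ (-(((n:ℝ) - 2) / (2 - s)))) ^ 2) =
    kappa n s ^ 2 * (y ^ ((n:ℝ) + 1) * (1 + y ^ (2 - s)) ^ (-(2 * (((n:ℝ) - 2) / (2 - s)))))
  rw [mul_pow]
  rw [show y ^ (n - 1 : ℕ) *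
      (y ^ 2 * (kappa n s ^ 2 * ((1 + y ^ (2 - s)) ^ (-(((n:ℝ) - 2) / (2 - s)))) ^ 2)) =
      kappa n s ^ 2 * ((y ^ (n - 1 : ℕ) * y ^ (2 : ℕ)) *
        ((1 + y ^ (2 - s)) ^ (-(((n:ℝ) - 2) / (2 - s)))) ^ 2) from by ring]
  rw [← pow_add, show n - 1 + 2 = n + 1 from by omega,
    ← Real.rpow_natCast y (n + 1),
    ← Real.rpow_natCast ((1 + y ^ (2 - s)) ^ (-(((n:ℝ) - 2) / (2 - s)))) 2,
    ← Real.rpow_mul hA.le]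
  push_cast
  ring_nf


lemma intC {n : ℕ} (hn : 7 ≤ n) {s : ℝ} (hs0 : 0 < s) (hs2 : s < 2) :
    ∫ X : EuclideanSpace ℝ (Fin n), ‖X‖ ^ (4 - s) * (U1 n s X) ^ (critExp n s) =
      ((n : ℝ) * (volume (Metric.ball (0 : EuclideanSpace ℝ (Fin n)) 1)).toReal) *
        ((kappa n s ^ 2 * (((n:ℝ) - s) * ((n:ℝ) - 2))) *
          Ifun (2 - s) ((n:ℝ) + 3 - s) (2 * (((n:ℝ) - 2) / (2 - s)) + 2)) := by
  have h2s : (0:ℝ) < 2 - s := by linarith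
  have h7 : (7:ℝ) ≤ (n:ℝ) := by exact_mod_cast hn
  have hM : (0:ℝ) < ((n:ℝ) - s) * ((n:ℝ) - 2) := by nlinarith
  have hne1 : ((n:ℝ) - 2) ≠ 0 := by nlinarith
  have hne2 : (2 - s) ≠ 0 := ne_of_gt h2s
  rw [show (∫ X : EuclideanSpace ℝ (Fin n), ‖X‖ ^ (4 - s) * (U1 n s X) ^ (critExp n s)) =
      ((n : ℝ) * (volume (Metric.ball (0 : EuclideanSpace ℝ (Fin n)) 1)).toReal) *
        ∫ y in Ioi (0:ℝ), y ^ (n - 1 : ℕ) *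
          (y ^ (4 - s) *
            (kappa n s * (1 + y ^ (2 - s)) ^ (-(((n:ℝ) - 2) / (2 - s)))) ^ (critExp n s))
    from radial n hn
      (fun r : ℝ => r ^ (4 - s) *
        (kappa n s * (1 + r ^ (2 - s)) ^ (-(((n:ℝ) - 2) / (2 - s)))) ^ (critExp n s))]
  congr 1
  rw [Ifun, ← integral_const_mul]
  apply setIntegral_congr_fun measurableSet_Ioi
  intro y hy
  have hy0 : (0:ℝ) < y := hy
  have hA : (0:ℝ) < 1 + y ^ (2 - s) := by positivity
  show y ^ (n - 1 : ℕ) *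
      (y ^ (4 - s) *
        (kappa n s * (1 + y ^ (2 - s)) ^ (-(((n:ℝ) - 2) / (2 - s)))) ^ (critExp n s)) =
    kappa n s ^ 2 * (((n:ℝ) - s) * ((n:ℝ) - 2)) *
      (y ^ ((n:ℝ) + 3 - s) * (1 + y ^ (2 - s)) ^ (-(2 * (((n:ℝ) - 2) / (2 - s)) + 2)))
  rw [← mul_assoc, ← Real.rpow_natCast y (n - 1), ← Real.rpow_add hy0,
    show ((n - 1 : ℕ) : ℝ) + (4 - s) = (n:ℝ) + 3 - s from by
      rw [Nat.cast_sub (by omega : 1 ≤ n)]; push_cast; ring]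
  rw [critExp, kappa,
    Real.mul_rpow (Real.rpow_nonneg hM.le _) (Real.rpow_nonneg hA.le _),
    ← Real.rpow_mul hM.le, ← Real.rpow_mul hA.le,
    show -(((n:ℝ) - 2) / (2 - s)) * (2 * ((n:ℝ) - s) / ((n:ℝ) - 2)) =
        -(2 * (((n:ℝ) - 2) / (2 - s)) + 2) from by
      field_simp; ring,
    show ((n:ℝ) - 2) / (2 * (2 - s)) * (2 * ((n:ℝ) - s) / ((n:ℝ) - 2)) =
        ((n:ℝ) - 2) / (2 * (2 - s)) * 2 + 1 from by
      field_simp; ring,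
    Real.rpow_add hM, Real.rpow_one,
    show (((((n:ℝ) - s) * ((n:ℝ) - 2)) ^ (((n:ℝ) - 2) / (2 * (2 - s)))) : ℝ) ^ (2:ℕ) =
        (((n:ℝ) - s) * ((n:ℝ) - 2)) ^ ((((n:ℝ) - 2) / (2 * (2 - s))) * 2) from by
      rw [← Real.rpow_natCast ((((n:ℝ) - s) * ((n:ℝ) - 2)) ^ (((n:ℝ) - 2) / (2 * (2 - s)))) 2,
        ← Real.rpow_mul hM.le]
      norm_num]
  ring

lemma intA {n : ℕ} (hn : 7 ≤ n) {s : ℝ} (hs0 : 0 < s) (hs2 : s < 2) :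
    ∫ X : EuclideanSpace ℝ (Fin n), ‖X‖ ^ 4 * ‖gradient (U1 n s) X‖ ^ 2 =
      ((n : ℝ) * (volume (Metric.ball (0 : EuclideanSpace ℝ (Fin n)) 1)).toReal) *
        ((kappa n s ^ 2 * ((n:ℝ) - 2) ^ 2) *
          Ifun (2 - s) ((n:ℝ) + 5 - 2 * s) (2 * (((n:ℝ) - 2) / (2 - s)) + 2)) := by
  have hae : (fun X : EuclideanSpace ℝ (Fin n) => ‖X‖ ^ 4 * ‖gradient (U1 n s) X‖ ^ 2)
      =ᵐ[volume] (fun X : EuclideanSpace ℝ (Fin n) =>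
        ‖X‖ ^ 4 * (kappa n s * ((n : ℝ) - 2) *
          (‖X‖ ^ (1 - s) * (1 + ‖X‖ ^ (2 - s)) ^ (-((((n : ℝ) - 2) / (2 - s)) + 1)))) ^ 2) := by
    haveI : NeZero n := ⟨by omega⟩
    have h0 : (volume : Measure (EuclideanSpace ℝ (Fin n))) {0} = 0 := measure_singleton 0
    filter_upwards [compl_mem_ae_iff.mpr h0] with X hX
    rw [grad_norm hn hs0 hs2 (by simpa using hX)]
  rw [integral_congr_ae hae]
  rw [show (∫ X : EuclideanSpace ℝ (Fin n),
        ‖X‖ ^ 4 * (kappa n s * ((n : ℝ) - 2) *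
          (‖X‖ ^ (1 - s) * (1 + ‖X‖ ^ (2 - s)) ^ (-((((n : ℝ) - 2) / (2 - s)) + 1)))) ^ 2) =
      ((n : ℝ) * (volume (Metric.ball (0 : EuclideanSpace ℝ (Fin n)) 1)).toReal) *
        ∫ y in Ioi (0:ℝ), y ^ (n - 1 : ℕ) *
          (y ^ 4 * (kappa n s * ((n : ℝ) - 2) *
            (y ^ (1 - s) * (1 + y ^ (2 - s)) ^ (-((((n : ℝ) - 2) / (2 - s)) + 1)))) ^ 2)
    from radial n hn
      (fun r : ℝ => r ^ 4 * (kappa n s * ((n : ℝ) - 2) *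
        (r ^ (1 - s) * (1 + r ^ (2 - s)) ^ (-((((n : ℝ) - 2) / (2 - s)) + 1)))) ^ 2)]
  congr 1
  rw [Ifun, ← integral_const_mul]
  apply setIntegral_congr_fun measurableSet_Ioi
  intro y hy
  have hy0 : (0:ℝ) < y := hy
  have hA : (0:ℝ) < 1 + y ^ (2 - s) := by positivity
  show y ^ (n - 1 : ℕ) *
      (y ^ 4 * (kappa n s * ((n : ℝ) - 2) *
        (y ^ (1 - s) * (1 + y ^ (2 - s)) ^ (-((((n : ℝ) - 2) / (2 - s)) + 1)))) ^ 2) =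
    kappa n s ^ 2 * ((n:ℝ) - 2) ^ 2 *
      (y ^ ((n:ℝ) + 5 - 2 * s) * (1 + y ^ (2 - s)) ^ (-(2 * (((n:ℝ) - 2) / (2 - s)) + 2)))
  rw [show y ^ (n - 1 : ℕ) *
      (y ^ 4 * (kappa n s * ((n : ℝ) - 2) *
        (y ^ (1 - s) * (1 + y ^ (2 - s)) ^ (-((((n : ℝ) - 2) / (2 - s)) + 1)))) ^ 2) =
      kappa n s ^ 2 * ((n:ℝ) - 2) ^ 2 *
        (((y ^ (n - 1 : ℕ) * y ^ (4:ℕ)) * (y ^ (1 - s)) ^ (2:ℕ)) *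
          ((1 + y ^ (2 - s)) ^ (-((((n : ℝ) - 2) / (2 - s)) + 1))) ^ (2:ℕ)) from by ring]
  rw [← pow_add, show n - 1 + 4 = n + 3 from by omega,
    ← Real.rpow_natCast y (n + 3),
    ← Real.rpow_natCast (y ^ (1 - s)) 2, ← Real.rpow_mul hy0.le,
    ← Real.rpow_add hy0,
    show ((n + 3 : ℕ) : ℝ) + (1 - s) * ((2:ℕ):ℝ) = (n:ℝ) + 5 - 2 * s from by
      push_cast; ring,
    ← Real.rpow_natCast ((1 + y ^ (2 - s)) ^ (-((((n : ℝ) - 2) / (2 - s)) + 1))) 2,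
    ← Real.rpow_mul hA.le,
    show -((((n:ℝ) - 2) / (2 - s)) + 1) * ((2:ℕ):ℝ) = -(2 * (((n:ℝ) - 2) / (2 - s)) + 2) from by
      push_cast; ring]



lemma final_algebra {nn ss I0 I1 J1 J2 K c kap : ℝ}
    (R1 : (nn + 1 + 1) * I0 = 2 * (nn - 2) * J1)
    (R2 : (nn + 1 + 1) * I1 = (2 * nn - 2 - ss) * J2)
    (R3 : J1 = I0 - I1)
    (R4 : K = J1 - J2)
    (hc : c ≠ 0) (hk : kap ≠ 0) (hI0 : I0 ≠ 0)
    (h1 : nn - 2 ≠ 0) (h2 : nn - ss ≠ 0) (h3 : 2 * nn - 2 - ss ≠ 0) :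
    (c * (kap ^ 2 * (nn - 2) ^ 2 * K)) / (c * (kap ^ 2 * I0)) -
      (2 / (2 * (nn - ss) / (nn - 2))) *
        ((c * (kap ^ 2 * ((nn - ss) * (nn - 2)) * J2)) / (c * (kap ^ 2 * I0))) =
    (nn + 2) * (nn - 2) * (10 - ss) / (2 * (2 * nn - 2 - ss)) := by
  have hJ1 : J1 = (nn + 2) * I0 / (2 * (nn - 2)) := by
    rw [eq_div_iff (by simpa using mul_ne_zero two_ne_zero h1)]
    linear_combination -R1
  have hI1 : I1 = I0 - J1 := by linarith [R3]
  have hJ2 : J2 = (nn + 2) * I1 / (2 * nn - 2 - ss) := by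
    rw [eq_div_iff h3]
    linear_combination -R2
  rw [R4, hJ2, hI1, hJ1]
  have h3' : 2 * (nn - 1) - ss ≠ 0 := by intro h; apply h3; linarith
  field_simp
  ring

theorem stmt_11 (n : ℕ) (hn : 7 ≤ n) (s : ℝ) (hs0 : 0 < s) (hs2 : s < 2) :
    (∫ X : EuclideanSpace ℝ (Fin n), ‖X‖ ^ 4 * ‖gradient (U1 n s) X‖ ^ 2) /
          (∫ X : EuclideanSpace ℝ (Fin n), ‖X‖ ^ 2 * (U1 n s X) ^ 2) -
        (2 / critExp n s) *
          ((∫ X : EuclideanSpace ℝ (Fin n), ‖X‖ ^ (4 - s) * (U1 n s X) ^ (critExp n s)) /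
            (∫ X : EuclideanSpace ℝ (Fin n), ‖X‖ ^ 2 * (U1 n s X) ^ 2)) =
      ((n : ℝ) + 2) * ((n : ℝ) - 2) * (10 - s) / (2 * (2 * (n : ℝ) - 2 - s)) := by
  haveI : NeZero n := ⟨by omega⟩
  have h7 : (7:ℝ) ≤ (n:ℝ) := by exact_mod_cast hn
  have h2s : (0:ℝ) < 2 - s := by linarith
  have hne1 : ((n:ℝ) - 2) ≠ 0 := by nlinarith
  have hne2 : (2 - s) ≠ 0 := ne_of_gt h2s
  have hP2 : (2 - s) * (((n:ℝ) - 2) / (2 - s)) = (n:ℝ) - 2 := by field_simp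
  have hPpos : (0:ℝ) < ((n:ℝ) - 2) / (2 - s) := div_pos (by linarith) h2s
  -- the four relations between the one-dimensional integrals
  have R1 := ibpI (a := (n:ℝ) + 1) (b := 2 * (((n:ℝ) - 2) / (2 - s))) h2s
    (by linarith) (by linarith) (by nlinarith [hP2])
  rw [show (2 * (((n:ℝ) - 2) / (2 - s))) * (2 - s) = 2 * ((n:ℝ) - 2) from by
      field_simp,
    show (n:ℝ) + 1 + (2 - s) = (n:ℝ) + 3 - s from by ring,
    show (2 * (((n:ℝ) - 2) / (2 - s))) + 1 = 2 * (((n:ℝ) - 2) / (2 - s)) + 1 from rfl] at R1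
  have R2 := ibpI (a := (n:ℝ) + 1) (b := 2 * (((n:ℝ) - 2) / (2 - s)) + 1) h2s
    (by linarith) (by linarith) (by nlinarith [hP2])
  rw [show (2 * (((n:ℝ) - 2) / (2 - s)) + 1) * (2 - s) = 2 * (n:ℝ) - 2 - s from by
      field_simp; ring,
    show (n:ℝ) + 1 + (2 - s) = (n:ℝ) + 3 - s from by ring,
    show (2 * (((n:ℝ) - 2) / (2 - s)) + 1) + 1 = 2 * (((n:ℝ) - 2) / (2 - s)) + 2 from by ring]
    at R2
  have R3 := algI (a := (n:ℝ) + 1) (b := 2 * (((n:ℝ) - 2) / (2 - s)) + 1) h2s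
    (integrableI h2s (by linarith) (by linarith) (by nlinarith [hP2]))
    (integrableI h2s (by linarith) (by linarith) (by nlinarith [hP2]))
  rw [show (n:ℝ) + 1 + (2 - s) = (n:ℝ) + 3 - s from by ring,
    show (2 * (((n:ℝ) - 2) / (2 - s)) + 1) - 1 = 2 * (((n:ℝ) - 2) / (2 - s)) from by ring] at R3
  have R4 := algI (a := (n:ℝ) + 3 - s) (b := 2 * (((n:ℝ) - 2) / (2 - s)) + 2) h2s
    (integrableI h2s (by linarith) (by linarith) (by nlinarith [hP2]))
    (integrableI h2s (by linarith) (by linarith) (by nlinarith [hP2]))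
  rw [show (n:ℝ) + 3 - s + (2 - s) = (n:ℝ) + 5 - 2 * s from by ring,
    show (2 * (((n:ℝ) - 2) / (2 - s)) + 2) - 1 = 2 * (((n:ℝ) - 2) / (2 - s)) + 1 from by ring]
    at R4
  have hI0 : 0 < Ifun (2 - s) ((n:ℝ) + 1) (2 * (((n:ℝ) - 2) / (2 - s))) :=
    IposI h2s (by linarith) (by linarith) (by nlinarith [hP2])
  have hc : (0:ℝ) < (n : ℝ) * (volume (Metric.ball (0 : EuclideanSpace ℝ (Fin n)) 1)).toReal :=
    mul_pos (by exact_mod_cast Nat.pos_of_ne_zero (NeZero.ne n))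
      (ENNReal.toReal_pos (Metric.measure_ball_pos volume _ one_pos).ne' measure_ball_lt_top.ne)
  rw [intA hn hs0 hs2, intB hn hs0 hs2, intC hn hs0 hs2,
    show critExp n s = 2 * ((n:ℝ) - s) / ((n:ℝ) - 2) from rfl]
  exact final_algebra R1 R2 R3 R4 hc.ne' (kappa_pos hn hs2).ne' hI0.ne' hne1
    (by nlinarith) (by nlinarith)
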